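/- arXiv:1210.3279 — 6 statements merged into one kernel-verified Lean document; each statement's English description precedes it below -/
import Mathlib

section
/- (Weak duality for the learning graph programs.) For every certificate structure C on n variables, every primal-feasible solution (w, p) for C, and every dual-feasible solution α for C, one has Σ_{M∈C} α_∅(M)² ≤ Σ_{e∈E} w_e. -/
/-- A primal-feasible solution for the learning graph program of a certificate
structure `C` on `n` variables.  Arcs are encoded as pairs `(S, j)` with `j ∉ S`,
representing the arc from `S` to `S ∪ {j}`. -/
def PrimalFeasible (n : ℕ) (C : Finset (Finset (Finset (Fin n))))
    (w : Finset (Fin n) → Fin n → ℝ)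
    (p : Finset (Fin n) → Fin n → Finset (Finset (Fin n)) → ℝ) : Prop :=
  (∀ (S : Finset (Fin n)), ∀ j ∉ S, 0 ≤ w S j) ∧
  (∀ (S : Finset (Fin n)), ∀ j ∉ S, ∀ M ∈ C, w S j = 0 → p S j M = 0) ∧
  (∀ M ∈ C, ∑ S : Finset (Fin n), ∑ j ∈ Sᶜ, (p S j M) ^ 2 / w S j ≤ 1) ∧
  (∀ M ∈ C, ∀ S : Finset (Fin n), S ∉ M → S ≠ ∅ →
    ∑ j ∈ S, p (S.erase j) j M = ∑ j ∈ Sᶜ, p S j M) ∧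
  (∀ M ∈ C, ∑ j : Fin n, p ∅ j M = 1)

/-- A dual-feasible solution for the learning graph program of a certificate
structure `C` on `n` variables. -/
def DualFeasible (n : ℕ) (C : Finset (Finset (Finset (Fin n))))
    (α : Finset (Fin n) → Finset (Finset (Fin n)) → ℝ) : Prop :=
  (∀ (S : Finset (Fin n)), ∀ j ∉ S,
      ∑ M ∈ C, (α S M - α (insert j S) M) ^ 2 ≤ 1) ∧
  (∀ (S : Finset (Fin n)), ∀ M ∈ C, S ∈ M → α S M = 0)

/-- Weak duality for the learning graph programs. -/
theorem learning_graph_weak_duality (n : ℕ) (C : Finset (Finset (Finset (Fin n))))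
    (hCne : C.Nonempty)
    (hMne : ∀ M ∈ C, M.Nonempty)
    (hMup : ∀ M ∈ C, ∀ S ∈ M, ∀ S' : Finset (Fin n), S ⊆ S' → S' ∈ M)
    (w : Finset (Fin n) → Fin n → ℝ)
    (p : Finset (Fin n) → Fin n → Finset (Finset (Fin n)) → ℝ)
    (hwp : PrimalFeasible n C w p)
    (α : Finset (Fin n) → Finset (Finset (Fin n)) → ℝ)
    (hα : DualFeasible n C α) :
    ∑ M ∈ C, (α ∅ M) ^ 2 ≤ ∑ S : Finset (Fin n), ∑ j ∈ Sᶜ, w S j := by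
  classical
  obtain ⟨hw, hpw, hprim, hflow, hinit⟩ := hwp
  obtain ⟨hd1, hd2⟩ := hα
  -- telescoping identity
  have key : ∀ M ∈ C, α ∅ M =
      ∑ S : Finset (Fin n), ∑ j ∈ Sᶜ, p S j M * (α S M - α (insert j S) M) := by
    intro M hM
    have reindex : ∑ S : Finset (Fin n), ∑ j ∈ Sᶜ, p S j M * α (insert j S) M
        = ∑ S : Finset (Fin n), ∑ j ∈ S, p (S.erase j) j M * α S M := by
      rw [Finset.sum_sigma', Finset.sum_sigma']
      refine Finset.sum_nbij' (fun x => ⟨insert x.2 x.1, x.2⟩)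
        (fun x => ⟨x.1.erase x.2, x.2⟩) ?_ ?_ ?_ ?_ ?_
      · rintro ⟨S, j⟩ hx
        simp only [Finset.mem_sigma, Finset.mem_univ, Finset.mem_compl, true_and] at hx ⊢
        exact Finset.mem_insert_self _ _
      · rintro ⟨S, j⟩ hx
        simp only [Finset.mem_sigma, Finset.mem_univ, Finset.mem_compl, true_and] at hx ⊢
        exact Finset.notMem_erase _ _
      · rintro ⟨S, j⟩ hx
        simp only [Finset.mem_sigma, Finset.mem_univ, Finset.mem_compl, true_and] at hx
        simp [Finset.erase_insert_of_ne, Finset.erase_eq_of_notMem hx,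
          Finset.insert_comm, Finset.insert_erase, hx]
      · rintro ⟨S, j⟩ hx
        simp only [Finset.mem_sigma, Finset.mem_univ, true_and] at hx
        simp [Finset.insert_erase hx]
      · rintro ⟨S, j⟩ hx
        simp only [Finset.mem_sigma, Finset.mem_univ, Finset.mem_compl, true_and] at hx
        simp [Finset.erase_insert_of_ne, Finset.erase_eq_of_notMem hx]
    have expand : ∑ S : Finset (Fin n), ∑ j ∈ Sᶜ, p S j M * (α S M - α (insert j S) M)
        = ∑ S : Finset (Fin n),
            ((∑ j ∈ Sᶜ, p S j M) - ∑ j ∈ S, p (S.erase j) j M) * α S M := by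
      have : ∑ S : Finset (Fin n), ∑ j ∈ Sᶜ, p S j M * (α S M - α (insert j S) M)
          = (∑ S : Finset (Fin n), ∑ j ∈ Sᶜ, p S j M * α S M)
            - ∑ S : Finset (Fin n), ∑ j ∈ Sᶜ, p S j M * α (insert j S) M := by
        rw [← Finset.sum_sub_distrib]
        congr 1; ext S
        rw [← Finset.sum_sub_distrib]
        congr 1; ext j; ring
      rw [this, reindex, ← Finset.sum_sub_distrib]
      congr 1; ext S
      rw [sub_mul, Finset.sum_mul, Finset.sum_mul]
    have hz : ∀ S ∈ (Finset.univ : Finset (Finset (Fin n))), S ≠ ∅ →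
        ((∑ j ∈ Sᶜ, p S j M) - ∑ j ∈ S, p (S.erase j) j M) * α S M = 0 := by
      intro S _ hSne
      by_cases hSM : S ∈ M
      · rw [hd2 S M hM hSM, mul_zero]
      · rw [hflow M hM S hSM hSne, sub_self, zero_mul]
    rw [expand, Finset.sum_eq_single_of_mem (∅ : Finset (Fin n)) (Finset.mem_univ _) hz]
    simp [Finset.compl_empty, hinit M hM]
  -- Cauchy-Schwarz per M
  have hCS : ∀ M ∈ C, (α ∅ M) ^ 2 ≤
      ∑ S : Finset (Fin n), ∑ j ∈ Sᶜ, w S j * (α S M - α (insert j S) M) ^ 2 := by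
    intro M hM
    set f : (S : Finset (Fin n)) → Fin n → ℝ := fun S j => p S j M / Real.sqrt (w S j)
    set g : (S : Finset (Fin n)) → Fin n → ℝ :=
      fun S j => Real.sqrt (w S j) * (α S M - α (insert j S) M)
    have hfg : ∀ S : Finset (Fin n), ∀ j ∈ Sᶜ,
        f S j * g S j = p S j M * (α S M - α (insert j S) M) := by
      intro S j hj
      rw [Finset.mem_compl] at hj
      by_cases h0 : w S j = 0
      · simp [f, g, h0, hpw S j hj M hM h0]
      · have hs : Real.sqrt (w S j) ≠ 0 := by
          have := hw S j hj
          positivity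
        simp only [f, g]
        field_simp
    have hf2 : ∀ S : Finset (Fin n), ∀ j ∈ Sᶜ, f S j ^ 2 = p S j M ^ 2 / w S j := by
      intro S j hj
      rw [Finset.mem_compl] at hj
      simp [f, div_pow, Real.sq_sqrt (hw S j hj)]
    have hg2 : ∀ S : Finset (Fin n), ∀ j ∈ Sᶜ,
        g S j ^ 2 = w S j * (α S M - α (insert j S) M) ^ 2 := by
      intro S j hj
      rw [Finset.mem_compl] at hj
      simp [g, mul_pow, Real.sq_sqrt (hw S j hj)]
    have hkey := key M hM
    calc (α ∅ M) ^ 2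
        = (∑ S : Finset (Fin n), ∑ j ∈ Sᶜ, f S j * g S j) ^ 2 := by
          rw [hkey]; congr 1
          exact Finset.sum_congr rfl fun S _ => Finset.sum_congr rfl fun j hj => (hfg S j hj).symm
      _ = (∑ x ∈ Finset.univ.sigma (fun S : Finset (Fin n) => Sᶜ),
            f x.1 x.2 * g x.1 x.2) ^ 2 := by rw [Finset.sum_sigma']
      _ ≤ (∑ x ∈ Finset.univ.sigma (fun S : Finset (Fin n) => Sᶜ), f x.1 x.2 ^ 2)
          * ∑ x ∈ Finset.univ.sigma (fun S : Finset (Fin n) => Sᶜ), g x.1 x.2 ^ 2 :=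
          Finset.sum_mul_sq_le_sq_mul_sq _ _ _
      _ = (∑ S : Finset (Fin n), ∑ j ∈ Sᶜ, p S j M ^ 2 / w S j)
          * ∑ S : Finset (Fin n), ∑ j ∈ Sᶜ, w S j * (α S M - α (insert j S) M) ^ 2 := by
          congr 1
          · rw [← Finset.sum_sigma' Finset.univ (fun S : Finset (Fin n) => Sᶜ)
              (fun S j => f S j ^ 2)]
            exact Finset.sum_congr rfl fun S _ => Finset.sum_congr rfl (hf2 S)
          · rw [← Finset.sum_sigma' Finset.univ (fun S : Finset (Fin n) => Sᶜ)
              (fun S j => g S j ^ 2)]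
            exact Finset.sum_congr rfl fun S _ => Finset.sum_congr rfl (hg2 S)
      _ ≤ 1 * ∑ S : Finset (Fin n), ∑ j ∈ Sᶜ, w S j * (α S M - α (insert j S) M) ^ 2 := by
          refine mul_le_mul_of_nonneg_right (hprim M hM) ?_
          refine Finset.sum_nonneg fun S _ => Finset.sum_nonneg fun j hj => ?_
          rw [Finset.mem_compl] at hj
          exact mul_nonneg (hw S j hj) (sq_nonneg _)
      _ = _ := one_mul _
  calc ∑ M ∈ C, (α ∅ M) ^ 2
      ≤ ∑ M ∈ C, ∑ S : Finset (Fin n), ∑ j ∈ Sᶜ, w S j * (α S M - α (insert j S) M) ^ 2 :=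
        Finset.sum_le_sum hCS
    _ = ∑ S : Finset (Fin n), ∑ j ∈ Sᶜ, w S j * ∑ M ∈ C, (α S M - α (insert j S) M) ^ 2 := by
        rw [Finset.sum_comm]
        refine Finset.sum_congr rfl fun S _ => ?_
        rw [Finset.sum_comm]
        exact Finset.sum_congr rfl fun j _ => (Finset.mul_sum _ _ _).symm
    _ ≤ ∑ S : Finset (Fin n), ∑ j ∈ Sᶜ, w S j * 1 := by
        refine Finset.sum_le_sum fun S _ => Finset.sum_le_sum fun j hj => ?_
        rw [Finset.mem_compl] at hj
        exact mul_le_mul_of_nonneg_left (hd1 S j hj) (hw S j hj)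
    _ = _ := by simp
end

section
/- For each fixed integer k ≥ 1 there exists a constant c > 0 such that for every n ≥ k, the k-subset certificate structure on n variables admits a dual-feasible solution whose objective value is at least c·n^{k/(k+1)}. -/
/-- The `k`-subset certificate structure on `n` variables: for every
`A ⊆ [n]` with `|A| = k`, the member `M_A = {S : A ⊆ S}`. -/
def kSubsetCert (n k : ℕ) : Finset (Finset (Finset (Fin n))) :=
  (Finset.univ.filter fun A : Finset (Fin n) => A.card = k).image
    fun A => Finset.univ.filter fun S : Finset (Fin n) => A ⊆ S

open Finset

/-- `(n/k)^k ≤ C(n,k)`, in the integer form `n^k ≤ C(n,k) * k^k`. -/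
lemma pow_le_choose_mul_pow : ∀ k n : ℕ, k ≤ n → n ^ k ≤ n.choose k * k ^ k := by
  intro k
  induction k with
  | zero => intro n _; simp
  | succ k ih =>
    intro n hn
    obtain ⟨m, rfl⟩ : ∃ m, n = m + 1 := ⟨n - 1, by omega⟩
    have hkm : k ≤ m := by omega
    have hpos : 0 < k ^ k := by
      rcases Nat.eq_zero_or_pos k with h | h
      · simp [h]
      · exact Nat.pow_pos h
    have hmk : (m + 1) * k ≤ (k + 1) * m := by nlinarith
    have key : (m + 1) ^ (k + 1) * k ^ k
        ≤ ((m + 1).choose (k + 1) * (k + 1) ^ (k + 1)) * k ^ k := by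
      calc (m + 1) ^ (k + 1) * k ^ k = (m + 1) * ((m + 1) * k) ^ k := by
            rw [mul_pow]; ring
        _ ≤ (m + 1) * ((k + 1) * m) ^ k :=
            Nat.mul_le_mul_left _ (Nat.pow_le_pow_left hmk k)
        _ = (m + 1) * (m ^ k * (k + 1) ^ k) := by rw [mul_pow]; ring
        _ ≤ (m + 1) * (m.choose k * k ^ k * (k + 1) ^ k) := by
            have := ih m hkm
            exact Nat.mul_le_mul_left _ (Nat.mul_le_mul_right _ this)
        _ = ((m + 1) * m.choose k) * ((k + 1) ^ k * k ^ k) := by ring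
        _ = ((m + 1).choose (k + 1) * (k + 1)) * ((k + 1) ^ k * k ^ k) := by
            rw [← Nat.add_one_mul_choose_eq]
        _ = ((m + 1).choose (k + 1) * (k + 1) ^ (k + 1)) * k ^ k := by ring
    exact Nat.le_of_mul_le_mul_right key hpos

/-- Counting the sets `A` of size `k` that are contained in `insert j S` but
not in `S`. -/
lemma cross_count {n : ℕ} (k : ℕ) (S : Finset (Fin n)) (j : Fin n) :
    ((Finset.univ.filter fun A : Finset (Fin n) => A.card = k).filter
      fun A => A ⊆ insert j S ∧ ¬ A ⊆ S).card ≤ S.card.choose (k - 1) := by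
  rw [← Finset.card_powersetCard (k - 1) S]
  have hmem : ∀ A ∈ (Finset.univ.filter fun A : Finset (Fin n) => A.card = k).filter
      (fun A => A ⊆ insert j S ∧ ¬ A ⊆ S), j ∈ A := by
    intro A hA
    simp only [Finset.mem_filter, Finset.mem_univ, true_and] at hA
    obtain ⟨hcA, hsub, hnsub⟩ := hA
    by_contra hjA
    refine hnsub fun x hx => ?_
    rcases Finset.mem_insert.1 (hsub hx) with h | h
    · exact absurd (h ▸ hx) hjA
    · exact h
  apply Finset.card_le_card_of_injOn (fun A => A.erase j)
  · intro A hA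
    have hjA := hmem A hA
    simp only [Finset.mem_coe, Finset.mem_filter, Finset.mem_univ, true_and] at hA
    obtain ⟨hcA, hsub, hnsub⟩ := hA
    rw [Finset.mem_coe, Finset.mem_powersetCard]
    refine ⟨fun x hx => ?_, ?_⟩
    · have hxA := Finset.mem_of_mem_erase hx
      have hxj := Finset.ne_of_mem_erase hx
      rcases Finset.mem_insert.1 (hsub hxA) with h | h
      · exact absurd h hxj
      · exact h
    · rw [Finset.card_erase_of_mem hjA, hcA]
  · intro A hA B hB hAB
    have hjA := hmem A (Finset.mem_coe.1 hA)
    have hjB := hmem B (Finset.mem_coe.1 hB)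
    rw [← Finset.insert_erase hjA, ← Finset.insert_erase hjB]
    simp only at hAB
    rw [hAB]

set_option maxHeartbeats 1600000 in
/-- The `k`-subset certificate structure admits a dual-feasible solution of
objective value `Ω(n^{k/(k+1)})`. -/
theorem kSubset_dual_lower_bound (k : ℕ) (hk : 1 ≤ k) :
    ∃ c : ℝ, 0 < c ∧ ∀ n : ℕ, k ≤ n →
      ∃ α : Finset (Fin n) → Finset (Finset (Fin n)) → ℝ,
        DualFeasible n (kSubsetCert n k) α ∧
        c * (n : ℝ) ^ ((k : ℝ) / ((k : ℝ) + 1)) ≤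
          Real.sqrt (∑ M ∈ kSubsetCert n k, (α ∅ M) ^ 2) := by
  have hkR : (1 : ℝ) ≤ (k : ℝ) := by exact_mod_cast hk
  have hc2 : (0 : ℝ) < 2 * (k : ℝ) ^ k :=
    mul_pos two_pos (pow_pos (by linarith) k)
  refine ⟨(Real.sqrt (2 * (k : ℝ) ^ k))⁻¹,
    inv_pos.2 (Real.sqrt_pos.2 hc2), ?_⟩
  intro n hn
  have hn1 : 1 ≤ n := le_trans hk hn
  have hnR : (1 : ℝ) ≤ (n : ℝ) := by exact_mod_cast hn1
  have hnpos : (0 : ℝ) < (n : ℝ) := by linarith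
  have hk1 : (0 : ℝ) < (k : ℝ) + 1 := by linarith
  set t : ℝ := (n : ℝ) ^ ((k : ℝ) / ((k : ℝ) + 1)) with ht_def
  set E : ℝ := (n : ℝ) ^ ((k : ℝ) * ((k : ℝ) - 1) / ((k : ℝ) + 1)) with hE_def
  have ht1 : 1 ≤ t := Real.one_le_rpow hnR (by positivity)
  have htpos : 0 < t := lt_of_lt_of_le one_pos ht1
  have hE1 : 1 ≤ E := Real.one_le_rpow hnR
    (div_nonneg (mul_nonneg (by linarith) (by linarith)) (le_of_lt hk1))
  have hEpos : 0 < E := lt_of_lt_of_le one_pos hE1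
  set ε : ℝ := (Real.sqrt (2 * E))⁻¹ with hε_def
  have hεpos : 0 < ε := inv_pos.2 (Real.sqrt_pos.2 (by linarith))
  have hε2 : ε ^ 2 = (2 * E)⁻¹ := by
    rw [hε_def, inv_pow, Real.sq_sqrt (by linarith)]
  -- cast of k-1
  have hkm1 : ((k - 1 : ℕ) : ℝ) = (k : ℝ) - 1 := by
    push_cast [hk]; ring
  have htE : t ^ (k - 1) = E := by
    rw [ht_def, hE_def, ← Real.rpow_natCast _ (k - 1),
      ← Real.rpow_mul (le_of_lt hnpos), hkm1]
    congr 1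
    field_simp
  have hnE : (n : ℝ) ^ k / t ^ 2 = E := by
    rw [ht_def, hE_def, ← Real.rpow_natCast (n : ℝ) k,
      ← Real.rpow_natCast ((n : ℝ) ^ ((k : ℝ) / ((k : ℝ) + 1))) 2,
      ← Real.rpow_mul (le_of_lt hnpos), ← Real.rpow_sub hnpos]
    congr 1
    field_simp
    ring
  have hF : (Finset.univ.filter fun A : Finset (Fin n) => A.card = k).card
      = n.choose k := by
    rw [← Finset.powerset_univ, ← Finset.powersetCard_eq_filter,
      Finset.card_powersetCard, Finset.card_univ, Fintype.card_fin]
  -- injectivity of `A ↦ M_A`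
  have hinj : ∀ A ∈ Finset.univ.filter fun A : Finset (Fin n) => A.card = k,
      ∀ B ∈ Finset.univ.filter fun A : Finset (Fin n) => A.card = k,
      (Finset.univ.filter fun S : Finset (Fin n) => A ⊆ S)
        = (Finset.univ.filter fun S : Finset (Fin n) => B ⊆ S) → A = B := by
    intro A _ B _ hAB
    have h1 : A ⊆ B := by
      have : B ∈ Finset.univ.filter fun S : Finset (Fin n) => B ⊆ S := by
        simp
      rw [← hAB] at this
      simpa using this
    have h2 : B ⊆ A := by
      have : A ∈ Finset.univ.filter fun S : Finset (Fin n) => A ⊆ S := by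
        simp
      rw [hAB] at this
      simpa using this
    exact Finset.Subset.antisymm h1 h2
  refine ⟨fun S M => if S ∈ M then 0 else ε * max 0 (1 - (S.card : ℝ) / t),
    ⟨?_, ?_⟩, ?_⟩
  · -- feasibility constraint (i)
    intro S j hj
    rw [kSubsetCert, Finset.sum_image hinj]
    have hSmem : ∀ (A T : Finset (Fin n)),
        ((if T ∈ Finset.univ.filter fun S : Finset (Fin n) => A ⊆ S then (0:ℝ)
          else ε * max 0 (1 - (T.card : ℝ) / t))
        = if A ⊆ T then 0 else ε * max 0 (1 - (T.card : ℝ) / t)) := by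
      intro A T
      simp [Finset.mem_filter]
    have hcard : ((insert j S).card : ℝ) = (S.card : ℝ) + 1 := by
      rw [Finset.card_insert_of_notMem hj]; push_cast; ring
    set g : ℝ := max 0 (1 - (S.card : ℝ) / t) with hg_def
    set g' : ℝ := max 0 (1 - ((S.card : ℝ) + 1) / t) with hg'_def
    have hgdiff : (g - g') ^ 2 ≤ (1 / t) ^ 2 := by
      have h1 : |g - g'| ≤ |(1 - (S.card : ℝ) / t) - (1 - ((S.card : ℝ) + 1) / t)| := by
        rw [hg_def, hg'_def, max_comm 0 _, max_comm 0 _]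
        exact abs_max_sub_max_le_abs _ _ _
      have h2 : (1 - (S.card : ℝ) / t) - (1 - ((S.card : ℝ) + 1) / t) = 1 / t := by
        field_simp; ring
      rw [h2] at h1
      have h3 : |g - g'| ≤ 1 / t := le_trans h1 (le_of_eq (abs_of_pos (by positivity)))
      calc (g - g') ^ 2 = |g - g'| ^ 2 := (sq_abs _).symm
        _ ≤ (1 / t) ^ 2 := by
            apply pow_le_pow_left₀ (abs_nonneg _) h3
    have hgle : g ≤ 1 := by
      rw [hg_def]
      apply max_le zero_le_one
      have : (0:ℝ) ≤ (S.card : ℝ) / t := by positivity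
      linarith
    have hgnn : 0 ≤ g := le_max_left _ _
    calc ∑ A ∈ Finset.univ.filter fun A : Finset (Fin n) => A.card = k,
          ((if S ∈ Finset.univ.filter fun T : Finset (Fin n) => A ⊆ T then (0:ℝ)
            else ε * max 0 (1 - (S.card : ℝ) / t))
          - (if insert j S ∈ Finset.univ.filter fun T : Finset (Fin n) => A ⊆ T then (0:ℝ)
            else ε * max 0 (1 - ((insert j S).card : ℝ) / t))) ^ 2
        ≤ ∑ A ∈ Finset.univ.filter fun A : Finset (Fin n) => A.card = k,
          (if A ⊆ insert j S ∧ ¬ A ⊆ S then ε ^ 2 * g ^ 2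
            else ε ^ 2 * (1 / t) ^ 2) := by
          apply Finset.sum_le_sum
          intro A _
          rw [hSmem A S, hSmem A (insert j S), hcard]
          by_cases h1 : A ⊆ S
          · have h2 : A ⊆ insert j S := h1.trans (Finset.subset_insert _ _)
            rw [if_pos h1, if_pos h2, if_neg (by tauto)]
            simpa using by positivity
          · by_cases h2 : A ⊆ insert j S
            · rw [if_neg h1, if_pos h2, if_pos ⟨h2, h1⟩, sub_zero, mul_pow, ← hg_def]
            · rw [if_neg h1, if_neg h2, if_neg (by tauto), ← hg_def, ← hg'_def,
                ← mul_sub, mul_pow]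
              exact mul_le_mul_of_nonneg_left hgdiff (by positivity)
      _ ≤ 1 := by
          rw [Finset.sum_ite, Finset.sum_const, Finset.sum_const,
            nsmul_eq_mul, nsmul_eq_mul]
          have hA : (((Finset.univ.filter fun A : Finset (Fin n) => A.card = k).filter
              fun A => A ⊆ insert j S ∧ ¬ A ⊆ S).card : ℝ) * (ε ^ 2 * g ^ 2)
              ≤ ε ^ 2 * E := by
            rcases le_or_gt (1 - (S.card : ℝ) / t) 0 with hg0 | hg0
            · have : g = 0 := by rw [hg_def, max_eq_left hg0]
              rw [this]
              have : (0:ℝ) ≤ ε ^ 2 * E := by positivity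
              simpa using this
            · have hSt : (S.card : ℝ) ≤ t := by
                have h : (S.card : ℝ) / t < 1 := by linarith
                exact le_of_lt ((div_lt_one htpos).mp h)
              have hcount : (((Finset.univ.filter fun A : Finset (Fin n) => A.card = k).filter
                  fun A => A ⊆ insert j S ∧ ¬ A ⊆ S).card : ℝ) ≤ t ^ (k - 1) := by
                calc (((Finset.univ.filter fun A : Finset (Fin n) => A.card = k).filter
                    fun A => A ⊆ insert j S ∧ ¬ A ⊆ S).card : ℝ)
                    ≤ (S.card.choose (k - 1) : ℝ) := by exact_mod_cast cross_count k S j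
                  _ ≤ ((S.card ^ (k - 1) : ℕ) : ℝ) := by
                      exact_mod_cast Nat.choose_le_pow _ _
                  _ = ((S.card : ℝ)) ^ (k - 1) := by push_cast; ring
                  _ ≤ t ^ (k - 1) := pow_le_pow_left₀ (Nat.cast_nonneg _) hSt _
              calc (((Finset.univ.filter fun A : Finset (Fin n) => A.card = k).filter
                  fun A => A ⊆ insert j S ∧ ¬ A ⊆ S).card : ℝ) * (ε ^ 2 * g ^ 2)
                  ≤ t ^ (k - 1) * (ε ^ 2 * 1) := by
                    have hg2 : g ^ 2 ≤ 1 := by nlinarith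
                    exact mul_le_mul hcount
                      (mul_le_mul_of_nonneg_left hg2 (sq_nonneg ε))
                      (by positivity) (pow_nonneg (le_of_lt htpos) _)
                _ = ε ^ 2 * E := by rw [htE]; ring
          have hB : (((Finset.univ.filter fun A : Finset (Fin n) => A.card = k).filter
              fun A => ¬ (A ⊆ insert j S ∧ ¬ A ⊆ S)).card : ℝ) * (ε ^ 2 * (1 / t) ^ 2)
              ≤ ε ^ 2 * E := by
            have hcount : (((Finset.univ.filter fun A : Finset (Fin n) => A.card = k).filter
                fun A => ¬ (A ⊆ insert j S ∧ ¬ A ⊆ S)).card : ℝ) ≤ (n : ℝ) ^ k := by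
              calc (((Finset.univ.filter fun A : Finset (Fin n) => A.card = k).filter
                  fun A => ¬ (A ⊆ insert j S ∧ ¬ A ⊆ S)).card : ℝ)
                  ≤ ((Finset.univ.filter fun A : Finset (Fin n) => A.card = k).card : ℝ) := by
                    exact_mod_cast Finset.card_le_card (Finset.filter_subset _ _)
                _ = (n.choose k : ℝ) := by rw [hF]
                _ ≤ ((n ^ k : ℕ) : ℝ) := by exact_mod_cast Nat.choose_le_pow _ _
                _ = (n : ℝ) ^ k := by push_cast; ring
            calc (((Finset.univ.filter fun A : Finset (Fin n) => A.card = k).filter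
                fun A => ¬ (A ⊆ insert j S ∧ ¬ A ⊆ S)).card : ℝ) * (ε ^ 2 * (1 / t) ^ 2)
                ≤ (n : ℝ) ^ k * (ε ^ 2 * (1 / t) ^ 2) :=
                  mul_le_mul_of_nonneg_right hcount (by positivity)
              _ = ε ^ 2 * ((n : ℝ) ^ k / t ^ 2) := by field_simp
              _ = ε ^ 2 * E := by rw [hnE]
          calc _ ≤ ε ^ 2 * E + ε ^ 2 * E := add_le_add hA hB
            _ = 1 := by rw [hε2]; field_simp; ring
  · -- feasibility constraint (ii)
    intro S M _ hS
    simp [hS]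
  · -- objective value
    show _ ≤ Real.sqrt (∑ M ∈ kSubsetCert n k,
      (if (∅ : Finset (Fin n)) ∈ M then (0:ℝ)
        else ε * max 0 (1 - ((∅ : Finset (Fin n)).card : ℝ) / t)) ^ 2)
    have hobj : ∑ M ∈ kSubsetCert n k,
        ((if (∅ : Finset (Fin n)) ∈ M then (0:ℝ)
          else ε * max 0 (1 - ((∅ : Finset (Fin n)).card : ℝ) / t)) ^ 2)
          = (n.choose k : ℝ) * ε ^ 2 := by
      rw [kSubsetCert, Finset.sum_image hinj]
      have : ∀ A ∈ Finset.univ.filter fun A : Finset (Fin n) => A.card = k,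
          ((if (∅ : Finset (Fin n)) ∈ Finset.univ.filter
              (fun S : Finset (Fin n) => A ⊆ S) then (0:ℝ)
            else ε * max 0 (1 - ((∅ : Finset (Fin n)).card : ℝ) / t)) ^ 2) = ε ^ 2 := by
        intro A hA
        have hA' : A.card = k := (Finset.mem_filter.1 hA).2
        have hne : ¬ A ⊆ (∅ : Finset (Fin n)) := by
          rw [Finset.subset_empty]
          intro h
          rw [h] at hA'
          simp at hA'
          omega
        rw [if_neg (by simp [Finset.mem_filter, hne])]
        have h1 : (1 : ℝ) - ((∅ : Finset (Fin n)).card : ℝ) / t = 1 := by simp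
        rw [h1, max_eq_right zero_le_one, mul_one]
      rw [Finset.sum_congr rfl this, Finset.sum_const, hF, nsmul_eq_mul]
    rw [hobj]
    rw [Real.le_sqrt (by positivity) (by positivity)]
    have hkey : (n : ℝ) ^ k ≤ (n.choose k : ℝ) * (k : ℝ) ^ k := by
      exact_mod_cast pow_le_choose_mul_pow k n hn
    have ht2E : t ^ 2 * E = (n : ℝ) ^ k := by
      rw [← hnE, mul_comm, div_mul_cancel₀ _ (ne_of_gt (pow_pos htpos 2))]
    have hc2' : ((Real.sqrt (2 * (k : ℝ) ^ k))⁻¹) ^ 2 = (2 * (k : ℝ) ^ k)⁻¹ := by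
      rw [inv_pow, Real.sq_sqrt (le_of_lt hc2)]
    rw [mul_pow, hc2', hε2]
    have hfin : t ^ 2 * (2 * E) ≤ (n.choose k : ℝ) * (2 * (k : ℝ) ^ k) := by
      calc t ^ 2 * (2 * E) = 2 * (t ^ 2 * E) := by ring
        _ = 2 * (n : ℝ) ^ k := by rw [ht2E]
        _ ≤ 2 * ((n.choose k : ℝ) * (k : ℝ) ^ k) := by linarith
        _ = (n.choose k : ℝ) * (2 * (k : ℝ) ^ k) := by ring
    calc (2 * (k : ℝ) ^ k)⁻¹ * t ^ 2 = t ^ 2 / (2 * (k : ℝ) ^ k) := by ring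
      _ ≤ (n.choose k : ℝ) / (2 * E) := by
          rw [div_le_div_iff₀ hc2 (by linarith)]
          exact hfin
      _ = (n.choose k : ℝ) * (2 * E)⁻¹ := by ring
end

section
/- There exists a constant c > 0 such that for every n ≥ 1, the hidden shift certificate structure on 2n variables admits a dual-feasible solution whose objective value is at least c·n^{1/3}. -/
/-- The hidden shift certificate structure on `2n` variables, with variables
indexed by `Fin (2n)` (`0`-based).  In `1`-based terms, for each shift
`d ∈ [n]` the member `M_d` consists of all `S` containing a pair
`{a, n+1+((a+d) mod n)}` with `a ∈ [n]`.  Here `d` and `a` are represented by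
the `0`-based values `d₀ = d - 1` and `a₀ = a - 1` in `Fin n`, so the pair
becomes `{a₀, n + ((a₀ + d₀ + 2) mod n)}` in `Fin (2n)`. -/
def hiddenShiftCert (n : ℕ) : Finset (Finset (Finset (Fin (2 * n)))) :=
  Finset.univ.image fun d : Fin n =>
    Finset.univ.filter fun S : Finset (Fin (2 * n)) =>
      ∃ a : Fin n,
        (⟨a.1, by have := a.2; omega⟩ : Fin (2 * n)) ∈ S ∧
        (⟨n + ((a.1 + d.1 + 2) % n), by
            have h := a.2
            have h2 : (a.1 + d.1 + 2) % n < n := Nat.mod_lt _ (by omega)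
            omega⟩ : Fin (2 * n)) ∈ S

namespace HiddenShiftAux
open Finset

def embedL (n : ℕ) (a : Fin n) : Fin (2 * n) := ⟨a.1, by have := a.2; omega⟩

def embedR (n : ℕ) (d a : Fin n) : Fin (2 * n) :=
  ⟨n + ((a.1 + d.1 + 2) % n), by
    have h := a.2
    have h2 : (a.1 + d.1 + 2) % n < n := Nat.mod_lt _ (by omega)
    omega⟩

def Md (n : ℕ) (d : Fin n) : Finset (Finset (Fin (2 * n))) :=
  Finset.univ.filter fun S => ∃ a : Fin n, embedL n a ∈ S ∧ embedR n d a ∈ S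

lemma mem_Md {n : ℕ} {d : Fin n} {S : Finset (Fin (2 * n))} :
    S ∈ Md n d ↔ ∃ a : Fin n, embedL n a ∈ S ∧ embedR n d a ∈ S := by
  simp [Md]

lemma mod_shift_inj {n m x y : ℕ} (hx : x < n) (hy : y < n)
    (h : (m + x + 2) % n = (m + y + 2) % n) : x = y := by
  rcases le_total x y with hxy | hxy
  · have hd : n ∣ (m + y + 2) - (m + x + 2) := (Nat.modEq_iff_dvd' (by omega)).1 h
    have h0 : (m + y + 2) - (m + x + 2) = y - x := by omega
    rw [h0] at hd
    have := Nat.eq_zero_of_dvd_of_lt hd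
    omega
  · have hd : n ∣ (m + x + 2) - (m + y + 2) := (Nat.modEq_iff_dvd' (by omega)).1 h.symm
    have h0 : (m + x + 2) - (m + y + 2) = x - y := by omega
    rw [h0] at hd
    have := Nat.eq_zero_of_dvd_of_lt hd
    omega

lemma Md_inj {n : ℕ} : Function.Injective (Md n) := by
  intro d d' h
  have hn : 0 < n := d.pos
  have h0 : ({embedL n ⟨0, hn⟩, embedR n d ⟨0, hn⟩} : Finset (Fin (2 * n))) ∈ Md n d :=
    mem_Md.2 ⟨⟨0, hn⟩, by simp, by simp⟩
  rw [h] at h0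
  obtain ⟨a, ha1, ha2⟩ := mem_Md.1 h0
  have eL : (embedL n (⟨0, hn⟩ : Fin n)).1 = 0 := rfl
  have eR : (embedR n d (⟨0, hn⟩ : Fin n)).1 = n + ((0 + d.1 + 2) % n) := rfl
  have eLa : (embedL n a).1 = a.1 := rfl
  have eRa : (embedR n d' a).1 = n + ((a.1 + d'.1 + 2) % n) := rfl
  have hav : a.1 = 0 := by
    rcases Finset.mem_insert.1 ha1 with h1 | h1
    · have := congrArg Fin.val h1
      rw [eLa, eL] at this
      exact this
    · have := congrArg Fin.val (Finset.mem_singleton.1 h1)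
      rw [eLa, eR] at this
      have := a.2
      omega
  have hval : (embedR n d' a).1 = (embedR n d ⟨0, hn⟩).1 := by
    rcases Finset.mem_insert.1 ha2 with h1 | h1
    · have h2 := congrArg Fin.val h1
      rw [eRa, eL] at h2
      omega
    · exact congrArg Fin.val (Finset.mem_singleton.1 h1)
  rw [eRa, eR, hav] at hval
  have : d'.1 = d.1 := mod_shift_inj (m := 0) d'.2 d.2 (by omega)
  exact Fin.ext this.symm

lemma Md_mono {n : ℕ} {d : Fin n} {S : Finset (Fin (2 * n))} (j : Fin (2 * n))
    (hS : S ∈ Md n d) : insert j S ∈ Md n d := by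
  obtain ⟨a, h1, h2⟩ := mem_Md.1 hS
  exact mem_Md.2 ⟨a, Finset.mem_insert_of_mem h1, Finset.mem_insert_of_mem h2⟩

lemma empty_not_mem_Md {n : ℕ} {d : Fin n} : (∅ : Finset (Fin (2 * n))) ∉ Md n d := by
  simp [mem_Md]


noncomputable def xv (n : ℕ) : ℝ := (n : ℝ) ^ ((1 : ℝ) / 6)

noncomputable def Av (n : ℕ) : ℝ := 1 / (2 * xv n)

noncomputable def dv (n : ℕ) : ℝ := 1 / (Real.sqrt 2 * xv n ^ 3)

noncomputable def fv (n k : ℕ) : ℝ := max 0 (Av n - k * dv n)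

noncomputable def alph (n : ℕ) (S : Finset (Fin (2 * n)))
    (M : Finset (Finset (Fin (2 * n)))) : ℝ :=
  if S ∈ M then 0 else fv n S.card

lemma xv_pos {n : ℕ} (hn : 1 ≤ n) : 0 < xv n := by
  have : (0 : ℝ) < n := by exact_mod_cast hn
  exact Real.rpow_pos_of_pos this _

lemma xv_pow6 {n : ℕ} : xv n ^ 6 = n := by
  rw [xv, ← Real.rpow_natCast ((n : ℝ) ^ ((1 : ℝ) / 6)) 6,
    ← Real.rpow_mul (by positivity)]
  norm_num

lemma Av_pos {n : ℕ} (hn : 1 ≤ n) : 0 < Av n := by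
  have := xv_pos hn
  rw [Av]; positivity

lemma dv_pos {n : ℕ} (hn : 1 ≤ n) : 0 < dv n := by
  have := xv_pos hn
  have h2 : (0 : ℝ) < Real.sqrt 2 := by positivity
  rw [dv]; positivity

lemma fv_nonneg {n : ℕ} (k : ℕ) : 0 ≤ fv n k := le_max_left _ _

lemma fv_le_Av {n : ℕ} (hn : 1 ≤ n) (k : ℕ) : fv n k ≤ Av n := by
  apply max_le (Av_pos hn).le
  have h1 : 0 ≤ (k : ℝ) * dv n := mul_nonneg (Nat.cast_nonneg k) (dv_pos hn).le
  linarith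

lemma fv_zero {n : ℕ} (hn : 1 ≤ n) : fv n 0 = Av n := by
  simp [fv, max_eq_right (Av_pos hn).le]

lemma fv_step {n : ℕ} (hn : 1 ≤ n) (k : ℕ) :
    (fv n k - fv n (k + 1)) ^ 2 ≤ dv n ^ 2 := by
  have hd := (dv_pos hn).le
  have h1 : fv n (k + 1) ≤ fv n k := by
    apply max_le (le_max_left _ _)
    refine le_trans ?_ (le_max_right _ _)
    push_cast
    linarith
  have h2 : fv n k ≤ fv n (k + 1) + dv n := by
    apply max_le
    · linarith [fv_nonneg (n := n) (k + 1)]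
    · have hR : Av n - ((k + 1 : ℕ) : ℝ) * dv n ≤ fv n (k + 1) := le_max_right _ _
      push_cast at hR ⊢
      linarith
  exact sq_le_sq' (by linarith) (by linarith)

lemma key_nd {n : ℕ} (hn : 1 ≤ n) : (n : ℝ) * dv n ^ 2 = 1 / 2 := by
  have hx := xv_pos hn
  have hs : Real.sqrt 2 ^ 2 = 2 := Real.sq_sqrt (by norm_num)
  have hn0 : (n : ℝ) ≠ 0 := by positivity
  have h2 : dv n ^ 2 = 1 / (2 * (n : ℝ)) := by
    rw [dv, div_pow, one_pow, mul_pow, hs]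
    congr 1
    rw [← pow_mul]
    norm_num
    exact xv_pow6
  rw [h2]
  field_simp

lemma key1 {n : ℕ} (hn : 1 ≤ n) (k : ℕ) : (k : ℝ) * fv n k ^ 2 ≤ 1 / 2 := by
  have hx := xv_pos hn
  have hA := Av_pos hn
  have hδ := dv_pos hn
  have hs : Real.sqrt 2 ^ 2 = 2 := Real.sq_sqrt (by norm_num)
  have hs0 : (0 : ℝ) < Real.sqrt 2 := by positivity
  have hs2 : Real.sqrt 2 ≤ 2 := by nlinarith
  rcases le_total (k : ℝ) (xv n ^ 2) with hk | hk
  · have hfA := fv_le_Av hn k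
    have hf0 := fv_nonneg (n := n) k
    have hAx : Av n * (2 * xv n) = 1 := by
      rw [Av]; field_simp
    have h1 : fv n k * fv n k ≤ Av n * Av n := mul_le_mul hfA hfA hf0 hA.le
    have h2 : (k : ℝ) * (fv n k * fv n k) ≤ xv n ^ 2 * (Av n * Av n) := by
      apply mul_le_mul hk h1 (mul_nonneg hf0 hf0) (by positivity)
    have h3 : xv n ^ 2 * (Av n * Av n) = 1 / 4 := by nlinarith
    rw [sq]
    nlinarith
  · have hdx : dv n * (Real.sqrt 2 * xv n ^ 3) = 1 := by
      rw [dv]; field_simp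
    have h1 : Av n ≤ xv n ^ 2 * dv n := by
      rw [Av, div_le_iff₀ (by positivity)]
      nlinarith [mul_nonneg (mul_nonneg (sub_nonneg.2 hs2) (pow_nonneg hx.le 3)) hδ.le]
    have h2 : Av n ≤ (k : ℝ) * dv n := by
      calc Av n ≤ xv n ^ 2 * dv n := h1
        _ ≤ (k : ℝ) * dv n := mul_le_mul_of_nonneg_right hk hδ.le
    have : fv n k = 0 := max_eq_left (by linarith)
    rw [this]
    norm_num


lemma exists_wit {n : ℕ} {S : Finset (Fin (2 * n))} {j : Fin (2 * n)} {d : Fin n}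
    (hjr : n ≤ j.1) (hS : S ∉ Md n d) (hS' : insert j S ∈ Md n d) :
    ∃ a : Fin n, embedL n a ∈ S ∧ embedR n d a = j := by
  obtain ⟨a, ha1, ha2⟩ := mem_Md.1 hS'
  have haS : embedL n a ∈ S := by
    rcases Finset.mem_insert.1 ha1 with h | h
    · exfalso
      have hv := congrArg Fin.val h
      have e : (embedL n a).1 = a.1 := rfl
      rw [e] at hv
      have := a.2
      omega
    · exact h
  refine ⟨a, haS, ?_⟩
  rcases Finset.mem_insert.1 ha2 with h | h
  · exact h
  · exact absurd (mem_Md.2 ⟨a, haS, h⟩) hS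

lemma card_entered {n : ℕ} (S : Finset (Fin (2 * n))) (j : Fin (2 * n)) :
    ((Finset.univ.filter fun d : Fin n =>
        S ∉ Md n d ∧ insert j S ∈ Md n d)).card ≤ S.card := by
  classical
  by_cases hjl : j.1 < n
  · apply Finset.card_le_card_of_injOn (fun d => embedR n d ⟨j.1, hjl⟩)
    · intro d hd
      simp only [Finset.mem_coe, Finset.mem_filter, Finset.mem_univ, true_and] at hd ⊢
      obtain ⟨hS, hS'⟩ := hd
      obtain ⟨a, ha1, ha2⟩ := mem_Md.1 hS'
      have haj : a.1 = j.1 := by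
        by_contra hne
        have haS : embedL n a ∈ S := by
          rcases Finset.mem_insert.1 ha1 with h | h
          · exact absurd (congrArg Fin.val h) hne
          · exact h
        rcases Finset.mem_insert.1 ha2 with h | h
        · have hv := congrArg Fin.val h
          have e : (embedR n d a).1 = n + ((a.1 + d.1 + 2) % n) := rfl
          rw [e] at hv
          omega
        · exact hS (mem_Md.2 ⟨a, haS, h⟩)
      have haS2 : embedR n d a ∈ S := by
        rcases Finset.mem_insert.1 ha2 with h | h
        · exfalso
          have hv := congrArg Fin.val h
          have e : (embedR n d a).1 = n + ((a.1 + d.1 + 2) % n) := rfl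
          rw [e] at hv
          omega
        · exact h
      have heq : embedR n d (⟨j.1, hjl⟩ : Fin n) = embedR n d a := by
        apply Fin.ext
        show n + ((j.1 + d.1 + 2) % n) = n + ((a.1 + d.1 + 2) % n)
        rw [haj]
      rw [heq]
      exact haS2
    · intro d _ d' _ h
      have hv := congrArg Fin.val h
      have e1 : (embedR n d (⟨j.1, hjl⟩ : Fin n)).1 = n + ((j.1 + d.1 + 2) % n) := rfl
      have e2 : (embedR n d' (⟨j.1, hjl⟩ : Fin n)).1 = n + ((j.1 + d'.1 + 2) % n) := rfl
      rw [e1, e2] at hv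
      exact Fin.ext (mod_shift_inj (m := j.1) d.2 d'.2 (by omega))
  · push_neg at hjl
    apply Finset.card_le_card_of_injOn (fun d =>
      if h : ∃ a : Fin n, embedL n a ∈ S ∧ embedR n d a = j then embedL n h.choose else j)
    · intro d hd
      simp only [Finset.mem_coe, Finset.mem_filter, Finset.mem_univ, true_and] at hd ⊢
      have hex := exists_wit hjl hd.1 hd.2
      simp only [dif_pos hex]
      exact hex.choose_spec.1
    · intro d hd d' hd' h
      simp only [Finset.mem_coe, Finset.mem_filter, Finset.mem_univ, true_and] at hd hd'
      have hex := exists_wit hjl hd.1 hd.2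
      have hex' := exists_wit hjl hd'.1 hd'.2
      simp only [dif_pos hex, dif_pos hex'] at h
      have hval : hex.choose.1 = hex'.choose.1 := by
        have := congrArg Fin.val h
        exact this
      have h1 := hex.choose_spec.2
      have h2 := hex'.choose_spec.2
      have hv1 := congrArg Fin.val h1
      have hv2 := congrArg Fin.val h2
      have e1 : (embedR n d hex.choose).1 = n + ((hex.choose.1 + d.1 + 2) % n) := rfl
      have e2 : (embedR n d' hex'.choose).1 = n + ((hex'.choose.1 + d'.1 + 2) % n) := rfl
      rw [e1] at hv1
      rw [e2, ← hval] at hv2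
      exact Fin.ext (mod_shift_inj (m := hex.choose.1) d.2 d'.2 (by omega))


end HiddenShiftAux

open HiddenShiftAux Finset in
lemma hiddenShiftCert_eq (n : ℕ) : hiddenShiftCert n = Finset.univ.image (Md n) := rfl

open HiddenShiftAux Finset in
lemma hiddenShift_feasible {n : ℕ} (hn : 1 ≤ n) :
    DualFeasible (2 * n) (hiddenShiftCert n) (alph n) := by
  classical
  constructor
  · intro S j hj
    rw [hiddenShiftCert_eq, Finset.sum_image (fun a _ b _ h => Md_inj h)]
    have hcard : (insert j S).card = S.card + 1 := Finset.card_insert_of_notMem hj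
    rw [← Finset.sum_filter_add_sum_filter_not Finset.univ
        (fun d : Fin n => S ∉ Md n d ∧ insert j S ∈ Md n d)]
    have h1 : ∑ d ∈ Finset.univ.filter
          (fun d : Fin n => S ∉ Md n d ∧ insert j S ∈ Md n d),
        (alph n S (Md n d) - alph n (insert j S) (Md n d)) ^ 2 ≤ 1 / 2 := by
      have hterm : ∀ d ∈ Finset.univ.filter
          (fun d : Fin n => S ∉ Md n d ∧ insert j S ∈ Md n d),
          (alph n S (Md n d) - alph n (insert j S) (Md n d)) ^ 2 = fv n S.card ^ 2 := by
        intro d hd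
        simp only [Finset.mem_filter, Finset.mem_univ, true_and] at hd
        rw [alph, if_neg hd.1, alph, if_pos hd.2]
        ring
      rw [Finset.sum_congr rfl hterm, Finset.sum_const, nsmul_eq_mul]
      calc (((Finset.univ.filter fun d : Fin n =>
               S ∉ Md n d ∧ insert j S ∈ Md n d)).card : ℝ) * fv n S.card ^ 2
          ≤ (S.card : ℝ) * fv n S.card ^ 2 := by
            apply mul_le_mul_of_nonneg_right _ (sq_nonneg _)
            exact_mod_cast card_entered S j
        _ ≤ 1 / 2 := key1 hn S.card
    have h2 : ∑ d ∈ Finset.univ.filter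
          (fun d : Fin n => ¬(S ∉ Md n d ∧ insert j S ∈ Md n d)),
        (alph n S (Md n d) - alph n (insert j S) (Md n d)) ^ 2 ≤ 1 / 2 := by
      have hterm : ∀ d ∈ Finset.univ.filter
          (fun d : Fin n => ¬(S ∉ Md n d ∧ insert j S ∈ Md n d)),
          (alph n S (Md n d) - alph n (insert j S) (Md n d)) ^ 2 ≤ dv n ^ 2 := by
        intro d hd
        simp only [Finset.mem_filter, Finset.mem_univ, true_and] at hd
        by_cases hSd : S ∈ Md n d
        · rw [alph, if_pos hSd, alph, if_pos (Md_mono j hSd)]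
          simpa using sq_nonneg (dv n)
        · have hS' : insert j S ∉ Md n d := fun hc => hd ⟨hSd, hc⟩
          rw [alph, if_neg hSd, alph, if_neg hS', hcard]
          exact fv_step hn S.card
      calc ∑ d ∈ Finset.univ.filter
            (fun d : Fin n => ¬(S ∉ Md n d ∧ insert j S ∈ Md n d)),
          (alph n S (Md n d) - alph n (insert j S) (Md n d)) ^ 2
          ≤ ∑ _d ∈ Finset.univ.filter
            (fun d : Fin n => ¬(S ∉ Md n d ∧ insert j S ∈ Md n d)), dv n ^ 2 :=
            Finset.sum_le_sum hterm
        _ = (((Finset.univ.filter fun d : Fin n =>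
              ¬(S ∉ Md n d ∧ insert j S ∈ Md n d))).card : ℝ) * dv n ^ 2 := by
            rw [Finset.sum_const, nsmul_eq_mul]
        _ ≤ (n : ℝ) * dv n ^ 2 := by
            apply mul_le_mul_of_nonneg_right _ (sq_nonneg _)
            have := Finset.card_filter_le Finset.univ
              (fun d : Fin n => ¬(S ∉ Md n d ∧ insert j S ∈ Md n d))
            simp only [Finset.card_univ, Fintype.card_fin] at this
            exact_mod_cast this
        _ = 1 / 2 := key_nd hn
    linarith
  · intro S M _ hS
    simp [alph, hS]


open HiddenShiftAux Finset in
/-- The hidden shift certificate structure admits a dual-feasible solution of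
objective value `Ω(n^{1/3})`. -/
theorem hiddenShift_dual_lower_bound :
    ∃ c : ℝ, 0 < c ∧ ∀ n : ℕ, 1 ≤ n →
      ∃ α : Finset (Fin (2 * n)) → Finset (Finset (Fin (2 * n))) → ℝ,
        DualFeasible (2 * n) (hiddenShiftCert n) α ∧
        c * (n : ℝ) ^ ((1 : ℝ) / 3) ≤
          Real.sqrt (∑ M ∈ hiddenShiftCert n, (α ∅ M) ^ 2) := by
  refine ⟨1 / 2, by norm_num, fun n hn => ⟨alph n, hiddenShift_feasible hn, ?_⟩⟩
  have hx := xv_pos hn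
  have hobj : ∑ M ∈ hiddenShiftCert n, (alph n ∅ M) ^ 2 = (n : ℝ) * Av n ^ 2 := by
    rw [hiddenShiftCert_eq, Finset.sum_image (fun a _ b _ h => Md_inj h)]
    have hterm : ∀ d : Fin n, (alph n (∅ : Finset (Fin (2 * n))) (Md n d)) ^ 2
        = Av n ^ 2 := by
      intro d
      rw [alph, if_neg empty_not_mem_Md]
      rw [show (∅ : Finset (Fin (2 * n))).card = 0 from rfl, fv_zero hn]
    rw [Finset.sum_congr rfl (fun d _ => hterm d), Finset.sum_const, nsmul_eq_mul]
    simp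
  rw [hobj]
  have hsq : Real.sqrt ((n : ℝ) * Av n ^ 2) = xv n ^ 3 * Av n := by
    rw [← xv_pow6, show xv n ^ 6 = (xv n ^ 3) ^ 2 by ring, ← mul_pow]
    exact Real.sqrt_sq (mul_nonneg (pow_nonneg hx.le 3) (Av_pos hn).le)
  rw [hsq]
  have h13 : (n : ℝ) ^ ((1 : ℝ) / 3) = xv n ^ 2 := by
    rw [xv, ← Real.rpow_natCast ((n : ℝ) ^ ((1 : ℝ) / 6)) 2,
      ← Real.rpow_mul (by positivity)]
    norm_num
  rw [h13, Av]
  exact le_of_eq (by field_simp)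
end

section
/- Let C be a certificate structure on n variables, let q ≥ 2 be an integer, and for each M ∈ C let X_M ⊆ [q]^n be a non-empty set such that for every non-empty S ⊆ [n] with S ∉ M and every z ∈ [q]^S, the number of x ∈ X_M with x_S = z equals |X_M|/q^{|S|}. Let α_S(M) be real numbers with α_S(M) = 0 whenever S ∈ M, and let Y ⊆ [q]^n. Let Γ be the real matrix with rows indexed by X = {(x,M) : M ∈ C, x ∈ X_M} and columns indexed by Y, with entries Γ[(x,M), y] = sqrt(q^n/|X_M|)·Σ_{S⊆[n]} α_S(M)·E_S[x,y]. Then ‖Γ‖ ≥ sqrt((|Y|/q^n)·Σ_{M∈C} α_∅(M)²). -/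
/-- The projector matrices `E_S` on `[q]^n`:
`E_S[x,y] = Π_{j∈S} ([x_j = y_j] − 1/q) · Π_{j∉S} (1/q)`. -/
noncomputable def ES (q n : ℕ) (S : Finset (Fin n)) :
    Matrix (Fin n → Fin q) (Fin n → Fin q) ℝ :=
  Matrix.of fun x y => ∏ j : Fin n,
    if j ∈ S then ((if x j = y j then 1 else 0) - 1 / q) else (1 / q : ℝ)

/-- The spectral (`ℓ₂ → ℓ₂` operator) norm of a matrix. -/
noncomputable def specNorm {𝕜 : Type*} [RCLike 𝕜] {m l : Type*} [Fintype m] [Fintype l]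
    [DecidableEq l] (A : Matrix m l 𝕜) : ℝ :=
  ‖LinearMap.toContinuousLinearMap (Matrix.toEuclideanLin A)‖

lemma ES_split (q n : ℕ) (S : Finset (Fin n)) (x y : Fin n → Fin q) :
    ES q n S x y =
      (∏ j ∈ S, ((if x j = y j then (1:ℝ) else 0) - 1 / q)) * (1 / q : ℝ) ^ (n - S.card) := by
  rw [ES, Matrix.of_apply, Finset.prod_ite, Finset.prod_const]
  congr 1
  · apply Finset.prod_congr
    · simp
    · intros; rfl
  · congr 1
    simp [Finset.filter_not, Finset.card_sdiff_of_subset (Finset.subset_univ S)]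

lemma neg_one_pow_sub (a b : ℕ) (h : b ≤ a) : ((-1:ℝ)) ^ (a - b) = (-1) ^ a * (-1) ^ b := by
  have : (a - b) + 2 * b = a + b := by omega
  have h2 : ((-1:ℝ)) ^ ((a-b) + 2*b) = (-1)^(a+b) := by rw [this]
  rw [pow_add, pow_mul] at h2
  simp at h2
  rw [h2, pow_add]

lemma sum_powerset_neg_one_real {α : Type*} [DecidableEq α] (x : Finset α) :
    ∑ m ∈ x.powerset, ((-1:ℝ)) ^ m.card = (if x = ∅ then 1 else 0) := by
  have h := Finset.sum_powerset_neg_one_pow_card (x := x)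
  have := congrArg (fun z : ℤ => (z : ℝ)) h
  push_cast at this
  simpa using this

lemma sum_x_zero (q n : ℕ) (hq : 0 < q) (S : Finset (Fin n)) (hS : S ≠ ∅)
    (X : Finset (Fin n → Fin q)) (y : Fin n → Fin q)
    (hcount : ∀ T ⊆ S, ((X.filter fun x => ∀ j ∈ T, x j = y j).card : ℝ)
      = (X.card : ℝ) / (q:ℝ) ^ T.card) :
    ∑ x ∈ X, ∏ j ∈ S, ((if x j = y j then (1:ℝ) else 0) - 1 / q) = 0 := by
  have hqR : (0:ℝ) < (q:ℝ) := by exact_mod_cast hq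
  have expand : ∀ x : Fin n → Fin q,
      ∏ j ∈ S, ((if x j = y j then (1:ℝ) else 0) - 1 / q)
      = ∑ T ∈ S.powerset, (if ∀ j ∈ T, x j = y j then (1:ℝ) else 0) * (-(1/q)) ^ (S.card - T.card) := by
    intro x
    have : ∀ j ∈ S, ((if x j = y j then (1:ℝ) else 0) - 1 / q)
        = (if x j = y j then (1:ℝ) else 0) + (-(1/q)) := by intro j _; ring
    rw [Finset.prod_congr rfl this, Finset.prod_add]
    refine Finset.sum_congr rfl fun T hT => ?_
    rw [Finset.mem_powerset] at hT
    rw [Finset.prod_boole, Finset.prod_const, Finset.card_sdiff_of_subset hT]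
    simp
  rw [Finset.sum_congr rfl fun x _ => expand x, Finset.sum_comm]
  have step : ∀ T ∈ S.powerset,
      ∑ x ∈ X, (if ∀ j ∈ T, x j = y j then (1:ℝ) else 0) * (-(1/q)) ^ (S.card - T.card)
      = ((X.card : ℝ) * (-1)^S.card / (q:ℝ)^S.card) * (-1)^T.card := by
    intro T hT
    rw [Finset.mem_powerset] at hT
    have hc : T.card ≤ S.card := Finset.card_le_card hT
    rw [← Finset.sum_mul, Finset.sum_boole, hcount T hT]
    have : (-(1/(q:ℝ))) ^ (S.card - T.card) = (-1)^(S.card - T.card) * (1/(q:ℝ))^(S.card - T.card) := by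
      rw [← mul_pow]; ring_nf
    rw [this, neg_one_pow_sub _ _ hc]
    have hq1 : ((q:ℝ))^T.card ≠ 0 := by positivity
    have hq2 : ((q:ℝ))^(S.card - T.card) ≠ 0 := by positivity
    have hqq : ((q:ℝ))^T.card * ((q:ℝ))^(S.card - T.card) = (q:ℝ)^S.card := by
      rw [← pow_add]; congr 1; omega
    rw [← hqq]
    simp only [div_eq_mul_inv, mul_inv, one_div, inv_pow]
    ring
  rw [Finset.sum_congr rfl step, ← Finset.mul_sum,
    sum_powerset_neg_one_real, if_neg hS]
  ring

lemma sum_ES_empty (q n : ℕ) (X : Finset (Fin n → Fin q)) (y : Fin n → Fin q) :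
    ∑ x ∈ X, ES q n (∅ : Finset (Fin n)) x y = (X.card : ℝ) * (1 / (q:ℝ)) ^ n := by
  have : ∀ x ∈ X, ES q n (∅ : Finset (Fin n)) x y = (1 / (q:ℝ)) ^ n := by
    intro x _
    rw [ES_split]; simp
  rw [Finset.sum_congr rfl this, Finset.sum_const, nsmul_eq_mul]

lemma sum_ES_ne (q n : ℕ) (hq : 0 < q) (S : Finset (Fin n)) (hS : S ≠ ∅)
    (X : Finset (Fin n → Fin q)) (y : Fin n → Fin q)
    (hcount : ∀ T ⊆ S, ((X.filter fun x => ∀ j ∈ T, x j = y j).card : ℝ)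
      = (X.card : ℝ) / (q:ℝ) ^ T.card) :
    ∑ x ∈ X, ES q n S x y = 0 := by
  have : ∀ x ∈ X, ES q n S x y
      = (∏ j ∈ S, ((if x j = y j then (1:ℝ) else 0) - 1 / q)) * (1 / q : ℝ) ^ (n - S.card) :=
    fun x _ => ES_split q n S x y
  rw [Finset.sum_congr rfl this, ← Finset.sum_mul, sum_x_zero q n hq S hS X y hcount, zero_mul]


section Main
variable (n q : ℕ) (C : Finset (Finset (Finset (Fin n))))
  (XM : {M // M ∈ C} → Finset (Fin n → Fin q))

lemma sumR (f : {M // M ∈ C} × (Fin n → Fin q) → ℝ) :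
    ∑ z : {z : {M // M ∈ C} × (Fin n → Fin q) // z.2 ∈ XM z.1}, f z.1
    = ∑ M : {M // M ∈ C}, ∑ x ∈ XM M, f (M, x) := by
  rw [← Finset.sum_subtype (Finset.univ.filter fun z => z.2 ∈ XM z.1) (by simp) f]
  rw [Finset.sum_filter, Fintype.sum_prod_type]
  refine Finset.sum_congr rfl fun M _ => ?_
  simp [Finset.sum_ite_mem]

end Main

/-- Lower bound on the spectral norm of the adversary matrix `Γ` built from the
sets `X_M` with the orthogonality property and a family `α` vanishing on
certificates. -/
theorem gamma_norm_lower_bound (n q : ℕ) (hq : 2 ≤ q)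
    (C : Finset (Finset (Finset (Fin n)))) (hCne : C.Nonempty)
    (hMne : ∀ M ∈ C, M.Nonempty)
    (hMup : ∀ M ∈ C, ∀ S ∈ M, ∀ S' : Finset (Fin n), S ⊆ S' → S' ∈ M)
    (XM : {M // M ∈ C} → Finset (Fin n → Fin q))
    (hXM : ∀ M, (XM M).Nonempty)
    (horth : ∀ (M : {M // M ∈ C}) (S : Finset (Fin n)), S ≠ ∅ → S ∉ M.1 →
      ∀ z : {i // i ∈ S} → Fin q,
        (((XM M).filter fun x => ∀ i : {i // i ∈ S}, x i.1 = z i).card : ℝ) =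
          ((XM M).card : ℝ) / (q : ℝ) ^ S.card)
    (α : Finset (Fin n) → {M // M ∈ C} → ℝ)
    (hzero : ∀ (S : Finset (Fin n)) (M : {M // M ∈ C}), S ∈ M.1 → α S M = 0)
    (Y : Finset (Fin n → Fin q))
    (Γ : Matrix {z : {M // M ∈ C} × (Fin n → Fin q) // z.2 ∈ XM z.1} {y // y ∈ Y} ℝ)
    (hΓ : Γ = Matrix.of fun z y =>
      Real.sqrt ((q : ℝ) ^ n / ((XM z.1.1).card : ℝ)) *
        ∑ S : Finset (Fin n), α S z.1.1 * ES q n S z.1.2 y.1) :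
    Real.sqrt (((Y.card : ℝ) / (q : ℝ) ^ n) * ∑ M : {M // M ∈ C}, (α ∅ M) ^ 2) ≤
      specNorm Γ := by
  have hq0 : 0 < q := by omega
  have hqR : (0:ℝ) < (q:ℝ) := by exact_mod_cast hq0
  have hqn : (0:ℝ) < (q:ℝ) ^ n := by positivity
  set c : ℝ := ∑ M : {M // M ∈ C}, (α ∅ M) ^ 2 with hc
  have hc0 : 0 ≤ c := Finset.sum_nonneg fun _ _ => sq_nonneg _
  have hXcard : ∀ M, (0:ℝ) < ((XM M).card : ℝ) := fun M => by
    exact_mod_cast Finset.card_pos.2 (hXM M)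
  -- column sums
  have hcol : ∀ (M : {M // M ∈ C}) (y : Fin n → Fin q),
      ∑ S : Finset (Fin n), α S M * ∑ x ∈ XM M, ES q n S x y
      = α ∅ M * (((XM M).card : ℝ) * (1/(q:ℝ))^n) := by
    intro M y
    rw [Finset.sum_eq_single (∅ : Finset (Fin n))]
    · rw [sum_ES_empty]
    · intro S _ hS
      by_cases hSM : S ∈ M.1
      · rw [hzero S M hSM, zero_mul]
      · rw [sum_ES_ne q n hq0 S hS (XM M) y ?_, mul_zero]
        intro T hTS
        by_cases hT : T = ∅
        · subst hT; simp
        · have hTM : T ∉ M.1 := fun h => hSM (hMup M.1 M.2 T h S hTS)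
          have h2 := horth M T hT hTM (fun i => y i.1)
          have h3 : Finset.filter (fun x => ∀ j ∈ T, x j = y j) (XM M)
              = Finset.filter (fun x => ∀ i : {i // i ∈ T}, x i.1 = y i.1) (XM M) := by
            apply Finset.filter_congr
            intro x _
            simp [Subtype.forall]
          rw [h3, h2]
    · intro h; exact absurd (Finset.mem_univ _) h
  -- degenerate case
  rcases eq_or_lt_of_le hc0 with hc0' | hcpos
  · rw [← hc0', mul_zero, Real.sqrt_zero]; exact norm_nonneg _
  rcases Nat.eq_zero_or_pos Y.card with hY0 | hYpos
  · rw [hY0]; simp; exact norm_nonneg _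
  have hYR : (0:ℝ) < (Y.card : ℝ) := by exact_mod_cast hYpos
  -- test vectors
  set u : EuclideanSpace ℝ {z : {M // M ∈ C} × (Fin n → Fin q) // z.2 ∈ XM z.1} :=
    WithLp.toLp 2 (fun z : {z : {M // M ∈ C} × (Fin n → Fin q) // z.2 ∈ XM z.1} => α ∅ z.1.1 / Real.sqrt ((XM z.1.1).card : ℝ)) with hu
  set v : EuclideanSpace ℝ {y // y ∈ Y} := WithLp.toLp 2 (fun _ => 1) with hv
  have hnu : ‖u‖ = Real.sqrt c := by
    rw [EuclideanSpace.norm_eq]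
    congr 1
    have h1 : ∀ z : {z : {M // M ∈ C} × (Fin n → Fin q) // z.2 ∈ XM z.1},
        ‖u z‖ ^ 2 = (fun p : {M // M ∈ C} × (Fin n → Fin q) =>
          (α ∅ p.1) ^ 2 / ((XM p.1).card : ℝ)) z.1 := by
      intro z
      rw [hu]
      simp only [PiLp.toLp_apply, Real.norm_eq_abs, sq_abs]
      rw [div_pow, Real.sq_sqrt (le_of_lt (hXcard _))]
    rw [Finset.sum_congr rfl (fun z _ => h1 z),
      sumR n q C XM (fun p => (α ∅ p.1) ^ 2 / ((XM p.1).card : ℝ))]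
    refine Finset.sum_congr rfl fun M _ => ?_
    show ∑ _x ∈ XM M, α ∅ M ^ 2 / ((XM M).card : ℝ) = α ∅ M ^ 2
    rw [Finset.sum_const, nsmul_eq_mul, mul_div_cancel₀ _ (ne_of_gt (hXcard M))]
  have hnv : ‖v‖ = Real.sqrt (Y.card : ℝ) := by
    rw [EuclideanSpace.norm_eq]
    simp [hv]
  -- the inner product
  have hAv : ∀ z, (Matrix.toEuclideanLin Γ v) z = ∑ y : {y // y ∈ Y}, Γ z y := by
    intro z
    simp [Matrix.toEuclideanLin_apply, Matrix.mulVec, dotProduct, hv]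
  have hinner : (inner ℝ u ((Matrix.toEuclideanLin Γ) v) : ℝ)
      = c * (Y.card : ℝ) / Real.sqrt ((q:ℝ)^n) := by
    rw [PiLp.inner_apply]
    simp only [RCLike.inner_apply, conj_trivial]
    rw [Finset.sum_congr rfl (fun z _ => by rw [hAv z])]
    subst hΓ
    set g : {M // M ∈ C} × (Fin n → Fin q) → ℝ := fun p =>
      (α ∅ p.1 / Real.sqrt ((XM p.1).card : ℝ)) *
        (Real.sqrt ((q:ℝ)^n / ((XM p.1).card : ℝ)) *
          ∑ y ∈ Y, ∑ S : Finset (Fin n), α S p.1 * ES q n S p.2 y) with hg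
    have hz : ∀ z : {z : {M // M ∈ C} × (Fin n → Fin q) // z.2 ∈ XM z.1},
        u z * (∑ y : {y // y ∈ Y}, Matrix.of (fun z y =>
          Real.sqrt ((q:ℝ)^n / ((XM z.1.1).card : ℝ)) *
            ∑ S : Finset (Fin n), α S z.1.1 * ES q n S z.1.2 y.1) z y) = g z.1 := by
      rintro ⟨⟨M, x⟩, hzmem⟩
      show (α ∅ M / Real.sqrt ((XM M).card : ℝ)) *
          (∑ y : {y // y ∈ Y}, Real.sqrt ((q:ℝ)^n / ((XM M).card : ℝ)) *
            ∑ S : Finset (Fin n), α S M * ES q n S x y.1)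
        = (α ∅ M / Real.sqrt ((XM M).card : ℝ)) *
          (Real.sqrt ((q:ℝ)^n / ((XM M).card : ℝ)) *
            ∑ y ∈ Y, ∑ S : Finset (Fin n), α S M * ES q n S x y)
      rw [← Finset.mul_sum,
        ← Finset.sum_subtype Y (fun _ => Iff.rfl)
          (fun y => ∑ S : Finset (Fin n), α S M * ES q n S x y)]
    rw [Finset.sum_congr rfl (fun z _ => (mul_comm _ _).trans (hz z)), sumR n q C XM g]
    have hXY : ∀ M : {M // M ∈ C},
        ∑ x ∈ XM M, ∑ y ∈ Y, ∑ S : Finset (Fin n), α S M * ES q n S x y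
        = (Y.card : ℝ) * (α ∅ M * (((XM M).card : ℝ) * (1/(q:ℝ))^n)) := by
      intro M
      rw [Finset.sum_comm]
      have hyy : ∀ y ∈ Y, ∑ x ∈ XM M, ∑ S : Finset (Fin n), α S M * ES q n S x y
          = α ∅ M * (((XM M).card : ℝ) * (1/(q:ℝ))^n) := by
        intro y _
        rw [Finset.sum_comm, ← hcol M y]
        exact Finset.sum_congr rfl fun S _ => (Finset.mul_sum _ _ _).symm
      rw [Finset.sum_congr rfl hyy, Finset.sum_const, nsmul_eq_mul]
    have key : ∀ M : {M // M ∈ C},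
        (α ∅ M / Real.sqrt ((XM M).card : ℝ)) *
          (Real.sqrt ((q:ℝ)^n / ((XM M).card : ℝ)) *
            ((Y.card : ℝ) * (α ∅ M * (((XM M).card : ℝ) * (1/(q:ℝ))^n))))
        = α ∅ M ^ 2 * ((Y.card : ℝ) / Real.sqrt ((q:ℝ)^n)) := by
      intro M
      have hX := hXcard M
      have h3 : ((1:ℝ)/(q:ℝ))^n = 1/(q:ℝ)^n := by rw [div_pow, one_pow]
      rw [Real.sqrt_div hqn.le, h3]
      set sX := Real.sqrt ((XM M).card : ℝ) with hsX
      set sQ := Real.sqrt ((q:ℝ)^n) with hsQ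
      have hsX0 : 0 < sX := Real.sqrt_pos.2 hX
      have hsQ0 : 0 < sQ := Real.sqrt_pos.2 hqn
      have h1 : ((XM M).card : ℝ) = sX ^ 2 := (Real.sq_sqrt hX.le).symm
      have h2 : ((q:ℝ))^n = sQ ^ 2 := (Real.sq_sqrt hqn.le).symm
      rw [h1, h2]
      have eX : sX * sX⁻¹ = 1 := mul_inv_cancel₀ hsX0.ne'
      have eQ : sQ * sQ⁻¹ = 1 := mul_inv_cancel₀ hsQ0.ne'
      linear_combination α ∅ M ^ 2 * (Y.card : ℝ) * sQ⁻¹ * ((sX * sX⁻¹) ^ 2 * eQ + (sX * sX⁻¹ + 1) * eX)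
    have perM : ∀ M : {M // M ∈ C}, ∑ x ∈ XM M, g (M, x)
        = α ∅ M ^ 2 * ((Y.card : ℝ) / Real.sqrt ((q:ℝ)^n)) := by
      intro M
      show ∑ x ∈ XM M, (α ∅ M / Real.sqrt ((XM M).card : ℝ)) *
          (Real.sqrt ((q:ℝ)^n / ((XM M).card : ℝ)) *
            ∑ y ∈ Y, ∑ S : Finset (Fin n), α S M * ES q n S x y)
        = α ∅ M ^ 2 * ((Y.card : ℝ) / Real.sqrt ((q:ℝ)^n))
      rw [← Finset.mul_sum, ← Finset.mul_sum, hXY M, key M]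
    rw [Finset.sum_congr rfl (fun M _ => perM M), ← Finset.sum_mul, ← hc]
    rw [mul_div_assoc]
  -- conclusion
  have hTv : ‖(Matrix.toEuclideanLin Γ) v‖ ≤ specNorm Γ * ‖v‖ := by
    have h := (LinearMap.toContinuousLinearMap (Matrix.toEuclideanLin Γ)).le_opNorm v
    simpa [specNorm] using h
  have hineq1 : (inner ℝ u ((Matrix.toEuclideanLin Γ) v) : ℝ)
      ≤ specNorm Γ * (Real.sqrt c * Real.sqrt (Y.card : ℝ)) := by
    calc (inner ℝ u ((Matrix.toEuclideanLin Γ) v) : ℝ)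
        ≤ ‖u‖ * ‖(Matrix.toEuclideanLin Γ) v‖ := real_inner_le_norm _ _
      _ ≤ ‖u‖ * (specNorm Γ * ‖v‖) := by
          exact mul_le_mul_of_nonneg_left hTv (norm_nonneg u)
      _ = specNorm Γ * (Real.sqrt c * Real.sqrt (Y.card : ℝ)) := by
          rw [hnu, hnv]; ring
  have hpos : 0 < Real.sqrt c * Real.sqrt (Y.card : ℝ) :=
    mul_pos (Real.sqrt_pos.2 hcpos) (Real.sqrt_pos.2 hYR)
  have heq : Real.sqrt (((Y.card : ℝ)/(q:ℝ)^n) * c) *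
      (Real.sqrt c * Real.sqrt (Y.card : ℝ)) = c * (Y.card : ℝ) / Real.sqrt ((q:ℝ)^n) := by
    rw [show ((Y.card : ℝ)/(q:ℝ)^n) * c
        = (Real.sqrt c * Real.sqrt (Y.card : ℝ) / Real.sqrt ((q:ℝ)^n))^2 by
      rw [div_pow, mul_pow, Real.sq_sqrt hc0, Real.sq_sqrt hYR.le, Real.sq_sqrt hqn.le]; ring]
    rw [Real.sqrt_sq (by positivity)]
    calc (Real.sqrt c * Real.sqrt (Y.card : ℝ) / Real.sqrt ((q:ℝ)^n)) *
        (Real.sqrt c * Real.sqrt (Y.card : ℝ))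
        = (Real.sqrt c * Real.sqrt c) * (Real.sqrt (Y.card : ℝ) * Real.sqrt (Y.card : ℝ))
            / Real.sqrt ((q:ℝ)^n) := by ring
      _ = c * (Y.card : ℝ) / Real.sqrt ((q:ℝ)^n) := by
          rw [Real.mul_self_sqrt hc0, Real.mul_self_sqrt hYR.le]
  rw [← mul_le_mul_iff_of_pos_right hpos, heq, ← hinner]
  exact hineq1
end

section
/- Let q ≥ 2 and n ≥ 1 be integers, let A ⊆ [n] be non-empty with |A| = k, let T be an orthogonal array of size q^{k−1} on A, and let X = {x ∈ [q]^n : x_A ∈ T}. Then |X| = q^{n−1}, and for every S ⊆ [n] that does not contain A and every z ∈ [q]^S, the number of x ∈ X with x_S = z equals q^{n−1−|S|} = |X|/q^{|S|}. -/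
set_option maxHeartbeats 1000000


/-- `T` is an orthogonal array of size `q^(|A|-1)` on the index set `A`:
for every coordinate `i ∈ A` and every assignment of values to the other
coordinates, exactly one value of coordinate `i` yields an element of `T`. -/
def IsOA {n : ℕ} (q : ℕ) (A : Finset (Fin n)) (T : Finset ({i // i ∈ A} → Fin q)) : Prop :=
  ∀ (i : {i // i ∈ A}) (z : {i // i ∈ A} → Fin q), ∃! v : Fin q, Function.update z i v ∈ T

/-- For an orthogonal array `T` on `A` and `X = {x ∈ [q]^n : x_A ∈ T}`,
one has `|X| = q^{n-1}`, and for every `S` not containing `A` the fibers of the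
projection of `X` to the coordinates of `S` all have size `q^{n-1-|S|}`. -/
theorem orthogonal_array_fibers (q n : ℕ) (hq : 2 ≤ q) (hn : 1 ≤ n)
    (A : Finset (Fin n)) (hA : A.Nonempty)
    (T : Finset ({i // i ∈ A} → Fin q)) (hT : IsOA q A T) :
    (Finset.univ.filter fun x : Fin n → Fin q =>
        (fun i : {i // i ∈ A} => x i.1) ∈ T).card = q ^ (n - 1) ∧
    ∀ S : Finset (Fin n), ¬A ⊆ S → ∀ z : {i // i ∈ S} → Fin q,
      ((Finset.univ.filter fun x : Fin n → Fin q =>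
          (fun i : {i // i ∈ A} => x i.1) ∈ T).filter
        fun x => ∀ i : {i // i ∈ S}, x i.1 = z i).card = q ^ (n - 1 - S.card) := by
  have key : ∀ S : Finset (Fin n), ¬A ⊆ S → ∀ z : {i // i ∈ S} → Fin q,
      ((Finset.univ.filter fun x : Fin n → Fin q =>
          (fun i : {i // i ∈ A} => x i.1) ∈ T).filter
        fun x => ∀ i : {i // i ∈ S}, x i.1 = z i).card = q ^ (n - 1 - S.card) := by
    intro S hS z
    obtain ⟨i0, hi0A, hi0S⟩ : ∃ i0, i0 ∈ A ∧ i0 ∉ S := by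
      by_contra h
      push_neg at h
      exact hS fun a ha => h a ha
    set R : Finset (Fin n) := Sᶜ.erase i0 with hR
    have hRmem : ∀ j, j ∈ R ↔ j ≠ i0 ∧ j ∉ S := by
      intro j; simp [hR]
    have hq0 : 0 < q := by omega
    let d : Fin q := ⟨0, hq0⟩
    -- partial fill
    let g0 : ({j // j ∈ R} → Fin q) → Fin n → Fin q := fun y j =>
      if h : j ∈ S then z ⟨j, h⟩ else if h2 : j ∈ R then y ⟨j, h2⟩ else d
    let zA : ({j // j ∈ R} → Fin q) → {i // i ∈ A} → Fin q := fun y i => g0 y i.1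
    let v : ({j // j ∈ R} → Fin q) → Fin q := fun y =>
      (hT ⟨i0, hi0A⟩ (zA y)).choose
    have hv1 : ∀ y, Function.update (zA y) ⟨i0, hi0A⟩ (v y) ∈ T := fun y =>
      (hT ⟨i0, hi0A⟩ (zA y)).choose_spec.1
    have hv2 : ∀ y w, Function.update (zA y) ⟨i0, hi0A⟩ w ∈ T → w = v y := fun y w hw =>
      (hT ⟨i0, hi0A⟩ (zA y)).choose_spec.2 w hw
    let g : ({j // j ∈ R} → Fin q) → Fin n → Fin q := fun y =>
      Function.update (g0 y) i0 (v y)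
    -- restriction to A of updates agree
    have hupd : ∀ y (w : Fin q),
        (fun i : {i // i ∈ A} => Function.update (g0 y) i0 w i.1)
          = Function.update (zA y) ⟨i0, hi0A⟩ w := by
      intro y w
      funext i
      rcases eq_or_ne i.1 i0 with h | h
      · have hi : i = ⟨i0, hi0A⟩ := Subtype.ext h
        subst hi
        simp [Function.update_self]
      · rw [Function.update_of_ne h, Function.update_of_ne (fun hc => h (by
          simpa using congrArg Subtype.val hc))]
    have hcard : ((Finset.univ.filter fun x : Fin n → Fin q =>
          (fun i : {i // i ∈ A} => x i.1) ∈ T).filter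
        fun x => ∀ i : {i // i ∈ S}, x i.1 = z i).card
        = (Finset.univ : Finset ({j // j ∈ R} → Fin q)).card := by
      apply Finset.card_nbij' (i := fun x (j : {j // j ∈ R}) => x j.1) (j := g)
      · intro x hx
        exact Finset.mem_univ _
      · intro y _
        simp only [Finset.mem_coe, Finset.mem_filter, Finset.mem_univ, true_and]
        constructor
        · show (fun i : {i // i ∈ A} => Function.update (g0 y) i0 (v y) i.1) ∈ T
          rw [hupd]
          exact hv1 y
        · intro i
          show Function.update (g0 y) i0 (v y) i.1 = z i
          rw [Function.update_of_ne (fun hc => hi0S (by rw [← hc]; exact i.2))]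
          simp only [g0]
          rw [dif_pos i.2]
      · intro x hx
        simp only [Finset.mem_coe, Finset.mem_filter, Finset.mem_univ, true_and] at hx
        obtain ⟨hxT, hxS⟩ := hx
        funext j
        have hg0 : ∀ j' : Fin n, j' ≠ i0 → g0 (fun j : {j // j ∈ R} => x j.1) j' = x j' := by
          intro j' hj'
          simp only [g0]
          by_cases h : j' ∈ S
          · rw [dif_pos h]; exact (hxS ⟨j', h⟩).symm
          · rw [dif_neg h, dif_pos ((hRmem j').mpr ⟨hj', h⟩)]
        show Function.update (g0 fun j : {j // j ∈ R} => x j.1) i0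
            (v fun j : {j // j ∈ R} => x j.1) j = x j
        rcases eq_or_ne j i0 with h | h
        · subst h
          rw [Function.update_self]
          refine (hv2 (fun j' : {j' // j' ∈ R} => x j'.1) (x j) ?_).symm
          have heq : Function.update (zA fun j' : {j' // j' ∈ R} => x j'.1)
              ⟨j, hi0A⟩ (x j) = fun i : {i // i ∈ A} => x i.1 := by
            funext i
            rcases eq_or_ne i ⟨j, hi0A⟩ with h2 | h2
            · subst h2
              rw [Function.update_self]
            · rw [Function.update_of_ne h2]
              exact hg0 i.1 (fun hc => h2 (Subtype.ext hc))
          rw [heq]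
          exact hxT
        · rw [Function.update_of_ne h]
          exact hg0 j h
      · intro y _
        funext j
        show Function.update (g0 y) i0 (v y) j.1 = y j
        have hj := (hRmem j.1).mp j.2
        rw [Function.update_of_ne hj.1]
        simp only [g0]
        rw [dif_neg hj.2, dif_pos j.2]
    rw [hcard]
    have hRcard : R.card = n - 1 - S.card := by
      have h1 : R.card = Sᶜ.card - 1 := Finset.card_erase_of_mem (by simp [hi0S])
      have h2 : Sᶜ.card = n - S.card := by
        rw [Finset.card_compl, Fintype.card_fin]
      rw [h1, h2, Nat.sub_right_comm]
    rw [Finset.card_univ, Fintype.card_fun, Fintype.card_coe, hRcard, Fintype.card_fin]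
  refine ⟨?_, key⟩
  have h0 : ¬A ⊆ (∅ : Finset (Fin n)) := fun h => hA.ne_empty (Finset.subset_empty.mp h)
  have := key ∅ h0 (fun i => absurd i.2 (Finset.notMem_empty _))
  rw [Finset.filter_true_of_mem (fun x _ => fun i => absurd i.2 (Finset.notMem_empty _))] at this
  simpa using this
end

section
/- Let q ≥ 2 and n ≥ 1 be integers, let A ⊆ [n] be non-empty, let a ∈ A, let T be an orthogonal array of size q^{|A|−1} on A, and let X = {x ∈ [q]^n : x_A ∈ T}. For S ⊆ [n] let E_S[X,·] denote the X × [q]^n submatrix of E_S formed by the rows indexed by X. Then for all S, S' ⊆ [n] with a ∉ S and a ∉ S', the matrix (E_S[X,·])ᵀ(E_{S'}[X,·]) equals (1/q)·E_S if S = S', and equals the zero matrix otherwise. -/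
open Matrix

lemma ES_update {q n : ℕ} {S : Finset (Fin n)} {a : Fin n} (ha : a ∉ S)
    (x y : Fin n → Fin q) (v : Fin q) :
    ES q n S (Function.update x a v) y = ES q n S x y := by
  unfold ES
  simp only [Matrix.of_apply]
  apply Finset.prod_congr rfl
  intro j _
  by_cases hj : j = a
  · subst hj; simp [ha]
  · rw [Function.update_of_ne hj]

lemma restrict_update {q n : ℕ} {A : Finset (Fin n)} {a : Fin n} (ha : a ∈ A)
    (y : Fin n → Fin q) (v : Fin q) :
    (fun i : {i // i ∈ A} => Function.update y a v i.1) =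
      Function.update (fun i : {i // i ∈ A} => y i.1) ⟨a, ha⟩ v := by
  funext i
  by_cases hi : (i : Fin n) = a
  · have hia : i = ⟨a, ha⟩ := Subtype.ext hi
    subst hia
    simp
  · rw [Function.update_of_ne hi, Function.update_of_ne (fun h => hi (by rw [h]))]

lemma sum_X_eq {q n : ℕ} (A : Finset (Fin n)) (a : Fin n) (ha : a ∈ A)
    (T : Finset ({i // i ∈ A} → Fin q)) (hT : IsOA q A T)
    (X : Finset (Fin n → Fin q))
    (hX : X = Finset.univ.filter fun x : Fin n → Fin q =>
      (fun i : {i // i ∈ A} => x i.1) ∈ T)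
    (g : (Fin n → Fin q) → ℝ)
    (hg : ∀ x v, g (Function.update x a v) = g x) :
    (q : ℝ) * ∑ x ∈ X, g x = ∑ x : Fin n → Fin q, g x := by
  have hmem : ∀ x : Fin n → Fin q, x ∈ X ↔ (fun i : {i // i ∈ A} => x i.1) ∈ T := by
    intro x; simp [hX]
  set φ : Fin q × {x // x ∈ X} → (Fin n → Fin q) :=
    fun p => Function.update p.2.1 a p.1 with hφ
  have hbij : Function.Bijective φ := by
    constructor
    · rintro ⟨v, x, hx⟩ ⟨v', x', hx'⟩ h
      simp only [hφ] at h
      have hv : v = v' := by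
        have := congrFun h a
        simpa using this
      have hoff : ∀ j, j ≠ a → x j = x' j := by
        intro j hj
        have := congrFun h j
        simpa [Function.update_of_ne hj] using this
      have hxa : x a = x' a := by
        have h1 : Function.update (fun i : {i // i ∈ A} => x i.1) ⟨a, ha⟩ (x a) ∈ T := by
          have : Function.update (fun i : {i // i ∈ A} => x i.1) ⟨a, ha⟩ (x a)
              = fun i : {i // i ∈ A} => x i.1 := Function.update_eq_self _ _
          rw [this]
          exact (hmem x).1 hx
        have h2 : Function.update (fun i : {i // i ∈ A} => x i.1) ⟨a, ha⟩ (x' a) ∈ T := by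
          have : Function.update (fun i : {i // i ∈ A} => x i.1) ⟨a, ha⟩ (x' a)
              = fun i : {i // i ∈ A} => x' i.1 := by
            funext i
            by_cases hi : (i : Fin n) = a
            · have hia : i = ⟨a, ha⟩ := Subtype.ext hi
              subst hia; simp
            · rw [Function.update_of_ne (fun hh => hi (by rw [hh]))]
              exact hoff i hi
          rw [this]
          exact (hmem x').1 hx'
        exact (hT ⟨a, ha⟩ (fun i => x i.1)).unique h1 h2
      have hx12 : x = x' := by
        funext j
        by_cases hj : j = a
        · subst hj; exact hxa
        · exact hoff j hj
      simp [hv, hx12]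
    · intro y
      obtain ⟨v, hv, -⟩ := hT ⟨a, ha⟩ (fun i : {i // i ∈ A} => y i.1)
      have hxX : Function.update y a v ∈ X := by
        rw [hmem, restrict_update ha]
        exact hv
      refine ⟨⟨y a, ⟨Function.update y a v, hxX⟩⟩, ?_⟩
      simp only [hφ]
      rw [Function.update_idem, Function.update_eq_self]
  calc (q : ℝ) * ∑ x ∈ X, g x
      = ∑ _v : Fin q, ∑ x ∈ X, g x := by
        rw [Finset.sum_const, Finset.card_univ, Fintype.card_fin, nsmul_eq_mul]
    _ = ∑ v : Fin q, ∑ x : {x // x ∈ X}, g (Function.update x.1 a v) := by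
        apply Finset.sum_congr rfl
        intro v _
        rw [← Finset.sum_coe_sort X g]
        exact Finset.sum_congr rfl (fun x _ => (hg x.1 v).symm)
    _ = ∑ p : Fin q × {x // x ∈ X}, g (φ p) := by
        rw [Fintype.sum_prod_type]
    _ = ∑ x : Fin n → Fin q, g x := Fintype.sum_bijective φ hbij _ _ (fun p => rfl)

lemma full_sum {q n : ℕ} (hq : 2 ≤ q) (S S' : Finset (Fin n)) (y z : Fin n → Fin q) :
    ∑ x : Fin n → Fin q, ES q n S x y * ES q n S' x z =
      if S = S' then ES q n S y z else 0 := by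
  have hq0 : (q : ℝ) ≠ 0 := Nat.cast_ne_zero.mpr (by omega)
  -- the per-coordinate factor
  set F : Fin n → Fin q → ℝ := fun j v =>
    (if j ∈ S then ((if v = y j then (1:ℝ) else 0) - 1 / (q:ℝ)) else (1 / (q:ℝ))) *
    (if j ∈ S' then ((if v = z j then (1:ℝ) else 0) - 1 / (q:ℝ)) else (1 / (q:ℝ))) with hF
  have hfac : ∀ x : Fin n → Fin q, ES q n S x y * ES q n S' x z = ∏ j, F j (x j) := by
    intro x
    unfold ES
    simp only [Matrix.of_apply, hF]
    rw [← Finset.prod_mul_distrib]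
  have hsumδ : ∀ c : Fin q, ∑ v : Fin q, (if v = c then (1:ℝ) else 0) = 1 := by
    intro c; simp
  have hQQ : ∀ c d : Fin q,
      ∑ v : Fin q, ((if v = c then (1:ℝ) else 0) - 1 / q) * ((if v = d then 1 else 0) - 1 / q)
        = (if c = d then 1 else 0) - 1 / q := by
    intro c d
    have expand : ∀ v : Fin q,
        ((if v = c then (1:ℝ) else 0) - 1 / q) * ((if v = d then 1 else 0) - 1 / q)
        = (if v = c then (1:ℝ) else 0) * (if v = d then 1 else 0)
          - (1/q) * (if v = c then (1:ℝ) else 0)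
          - (1/q) * (if v = d then (1:ℝ) else 0) + 1/q * (1/q) := by
      intro v; ring
    rw [Finset.sum_congr rfl (fun v _ => expand v)]
    simp only [Finset.sum_add_distrib, Finset.sum_sub_distrib, ← Finset.mul_sum, hsumδ,
      Finset.sum_const, Finset.card_univ, Fintype.card_fin, nsmul_eq_mul]
    have hδδ : ∑ v : Fin q, (if v = c then (1:ℝ) else 0) * (if v = d then 1 else 0)
        = if c = d then 1 else 0 := by
      by_cases hcd : c = d
      · subst hcd
        simp [mul_ite, ite_mul]
      · rw [if_neg hcd]
        apply Finset.sum_eq_zero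
        intro v _
        by_cases hvc : v = c
        · subst hvc; simp [hcd]
        · simp [hvc]
    rw [hδδ]
    field_simp
    ring
  have hQP : ∀ c : Fin q,
      ∑ v : Fin q, ((if v = c then (1:ℝ) else 0) - 1 / q) * (1 / q : ℝ) = 0 := by
    intro c
    simp only [sub_mul, Finset.sum_sub_distrib, ← Finset.sum_mul, hsumδ,
      Finset.sum_const, Finset.card_univ, Fintype.card_fin, nsmul_eq_mul]
    field_simp
    ring
  have hPQ : ∀ c : Fin q,
      ∑ v : Fin q, (1 / q : ℝ) * ((if v = c then (1:ℝ) else 0) - 1 / q) = 0 := by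
    intro c
    simp only [mul_sub, Finset.sum_sub_distrib, ← Finset.mul_sum, hsumδ,
      Finset.sum_const, Finset.card_univ, Fintype.card_fin, nsmul_eq_mul]
    field_simp
    ring
  have hPP : ∑ _v : Fin q, (1 / q : ℝ) * (1 / q) = 1 / q := by
    rw [Finset.sum_const, Finset.card_univ, Fintype.card_fin, nsmul_eq_mul]
    field_simp
  rw [Finset.sum_congr rfl (fun x _ => hfac x)]
  rw [← Fintype.piFinset_univ, ← Finset.prod_univ_sum]
  by_cases hSS : S = S'
  · subst hSS
    rw [if_pos rfl]
    unfold ES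
    simp only [Matrix.of_apply]
    apply Finset.prod_congr rfl
    intro j _
    by_cases hj : j ∈ S
    · simp only [hF, if_pos hj]
      exact hQQ (y j) (z j)
    · simp only [hF, if_neg hj]
      exact hPP
  · rw [if_neg hSS]
    have : ∃ j : Fin n, (j ∈ S ∧ j ∉ S') ∨ (j ∈ S' ∧ j ∉ S) := by
      by_contra hcon
      push_neg at hcon
      apply hSS
      apply Finset.Subset.antisymm
      · intro j hj
        exact (hcon j).1 hj
      · intro j hj
        exact (hcon j).2 hj
    obtain ⟨j, hj⟩ := this
    apply Finset.prod_eq_zero (Finset.mem_univ j)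
    rcases hj with ⟨h1, h2⟩ | ⟨h1, h2⟩
    · simp only [hF, if_pos h1, if_neg h2]
      exact hQP (y j)
    · simp only [hF, if_neg h2, if_pos h1]
      exact hPQ (z j)

/-- For `X` defined by an orthogonal array on `A`, `a ∈ A`, and `S, S'` omitting
`a`, one has `(E_S[X,·])ᵀ(E_{S'}[X,·]) = (1/q)·E_S` if `S = S'` and `= 0`
otherwise. -/
theorem ES_submatrix_orthogonality (q n : ℕ) (hq : 2 ≤ q) (hn : 1 ≤ n)
    (A : Finset (Fin n)) (hA : A.Nonempty) (a : Fin n) (ha : a ∈ A)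
    (T : Finset ({i // i ∈ A} → Fin q)) (hT : IsOA q A T)
    (X : Finset (Fin n → Fin q))
    (hX : X = Finset.univ.filter fun x : Fin n → Fin q =>
      (fun i : {i // i ∈ A} => x i.1) ∈ T)
    (S S' : Finset (Fin n)) (hS : a ∉ S) (hS' : a ∉ S') :
    (Matrix.of fun (x : {x // x ∈ X}) (y : Fin n → Fin q) => ES q n S x.1 y)ᵀ *
      (Matrix.of fun (x : {x // x ∈ X}) (y : Fin n → Fin q) => ES q n S' x.1 y) =
    if S = S' then ((q : ℝ))⁻¹ • ES q n S else 0 := by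
  have hq0 : (q : ℝ) ≠ 0 := Nat.cast_ne_zero.mpr (by omega)
  ext y z
  rw [Matrix.mul_apply]
  simp only [Matrix.transpose_apply, Matrix.of_apply]
  have hgX : (q : ℝ) * ∑ x ∈ X, ES q n S x y * ES q n S' x z
      = ∑ x : Fin n → Fin q, ES q n S x y * ES q n S' x z := by
    apply sum_X_eq A a ha T hT X hX
    intro x v
    rw [ES_update hS, ES_update hS']
  rw [Finset.sum_coe_sort X (fun x => ES q n S x y * ES q n S' x z)]
  have hsum : ∑ x ∈ X, ES q n S x y * ES q n S' x z
      = (q : ℝ)⁻¹ * (if S = S' then ES q n S y z else 0) := by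
    rw [← full_sum hq S S' y z, ← hgX]
    field_simp
  rw [hsum]
  by_cases hSS : S = S'
  · subst hSS
    simp [Matrix.smul_apply]
  · simp [hSS]
end
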